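/- For the constraint c_lin given by x₁ = 3·x₂ + 5·x₃ on three variables, the domain D₃ with D₃(x₁) = {3,4,6}, D₃(x₂) = [0,2] and D₃(x₃) = [0,1] is bounds(Z) consistent for c_lin but not bounds(D) consistent for c_lin. Hence bounds(Z) consistency does not imply bounds(D) consistency. -/

import Mathlib

/-- An integer valuation is an integer solution of constraint `c` if its
coercion to reals lies in `c`. -/
def IsIntSolution {n : ℕ} (c : Set (Fin n → ℝ)) (θ : Fin n → ℤ) : Prop :=
  (fun j => (θ j : ℝ)) ∈ c

/-- `D` is bounds(D) consistent for `c`. -/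
def BoundsDConsistent {n : ℕ} (D : Fin n → Finset ℤ) (hD : ∀ i, (D i).Nonempty)
    (c : Set (Fin n → ℝ)) : Prop :=
  ∀ i : Fin n, ∀ d ∈ ({(D i).min' (hD i), (D i).max' (hD i)} : Set ℤ),
    ∃ θ : Fin n → ℤ, IsIntSolution c θ ∧ θ i = d ∧ ∀ j, θ j ∈ D j

/-- `D` is bounds(Z) consistent for `c`. -/
def BoundsZConsistent {n : ℕ} (D : Fin n → Finset ℤ) (hD : ∀ i, (D i).Nonempty)
    (c : Set (Fin n → ℝ)) : Prop :=
  ∀ i : Fin n, ∀ d ∈ ({(D i).min' (hD i), (D i).max' (hD i)} : Set ℤ),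
    ∃ θ : Fin n → ℤ, IsIntSolution c θ ∧ θ i = d ∧
      ∀ j, (D j).min' (hD j) ≤ θ j ∧ θ j ≤ (D j).max' (hD j)

/-- `D` is bounds(R) consistent for `c`. -/
def BoundsRConsistent {n : ℕ} (D : Fin n → Finset ℤ) (hD : ∀ i, (D i).Nonempty)
    (c : Set (Fin n → ℝ)) : Prop :=
  ∀ i : Fin n, ∀ d ∈ ({(D i).min' (hD i), (D i).max' (hD i)} : Set ℤ),
    ∃ θ : Fin n → ℝ, θ ∈ c ∧ θ i = (d : ℝ) ∧
      ∀ j, ((D j).min' (hD j) : ℝ) ≤ θ j ∧ θ j ≤ ((D j).max' (hD j) : ℝ)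

/-- `D` is domain consistent for `c`. -/
def DomainConsistent {n : ℕ} (D : Fin n → Finset ℤ) (c : Set (Fin n → ℝ)) : Prop :=
  ∀ i : Fin n, ∀ d ∈ D i,
    ∃ θ : Fin n → ℤ, IsIntSolution c θ ∧ θ i = d ∧ ∀ j, θ j ∈ D j

/-- The constraint `x₁ = 3·x₂ + 5·x₃`. -/
def cLin : Set (Fin 3 → ℝ) := {θ | θ 0 = 3 * θ 1 + 5 * θ 2}

/-- The domain `D₃` with `D₃(x₁) = {3,4,6}`, `D₃(x₂) = [0,2]`, `D₃(x₃) = [0,1]`. -/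
noncomputable def D₃ : Fin 3 → Finset ℤ := ![{3, 4, 6}, Finset.Icc 0 2, Finset.Icc 0 1]

lemma m0 (h) : (D₃ 0).min' h = 3 :=
  le_antisymm (Finset.min'_le _ 3 (by decide)) (Finset.le_min' _ _ _ (by decide))
lemma M0 (h) : (D₃ 0).max' h = 6 :=
  le_antisymm (Finset.max'_le _ _ _ (by decide)) (Finset.le_max' _ 6 (by decide))
lemma m1 (h) : (D₃ 1).min' h = 0 :=
  le_antisymm (Finset.min'_le _ 0 (by decide)) (Finset.le_min' _ _ _ (by decide))
lemma M1 (h) : (D₃ 1).max' h = 2 :=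
  le_antisymm (Finset.max'_le _ _ _ (by decide)) (Finset.le_max' _ 2 (by decide))
lemma m2 (h) : (D₃ 2).min' h = 0 :=
  le_antisymm (Finset.min'_le _ 0 (by decide)) (Finset.le_min' _ _ _ (by decide))
lemma M2 (h) : (D₃ 2).max' h = 1 :=
  le_antisymm (Finset.max'_le _ _ _ (by decide)) (Finset.le_max' _ 1 (by decide))

lemma sol310 : IsIntSolution cLin ![3,1,0] := by
  show ((3:ℤ):ℝ) = 3 * ((1:ℤ):ℝ) + 5 * ((0:ℤ):ℝ); norm_num
lemma sol620 : IsIntSolution cLin ![6,2,0] := by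
  show ((6:ℤ):ℝ) = 3 * ((2:ℤ):ℝ) + 5 * ((0:ℤ):ℝ); norm_num
lemma sol501 : IsIntSolution cLin ![5,0,1] := by
  show ((5:ℤ):ℝ) = 3 * ((0:ℤ):ℝ) + 5 * ((1:ℤ):ℝ); norm_num

lemma bnds (hD : ∀ i, (D₃ i).Nonempty) (θ : Fin 3 → ℤ)
    (h0 : 3 ≤ θ 0 ∧ θ 0 ≤ 6) (h1 : 0 ≤ θ 1 ∧ θ 1 ≤ 2) (h2 : 0 ≤ θ 2 ∧ θ 2 ≤ 1) :
    ∀ j, (D₃ j).min' (hD j) ≤ θ j ∧ θ j ≤ (D₃ j).max' (hD j) := by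
  intro j
  fin_cases j
  · show (D₃ 0).min' (hD 0) ≤ θ 0 ∧ θ 0 ≤ (D₃ 0).max' (hD 0)
    rw [m0, M0]; exact h0
  · show (D₃ 1).min' (hD 1) ≤ θ 1 ∧ θ 1 ≤ (D₃ 1).max' (hD 1)
    rw [m1, M1]; exact h1
  · show (D₃ 2).min' (hD 2) ≤ θ 2 ∧ θ 2 ≤ (D₃ 2).max' (hD 2)
    rw [m2, M2]; exact h2

theorem boundsZ_not_boundsD_cLin (hD : ∀ i, (D₃ i).Nonempty) :
    BoundsZConsistent D₃ hD cLin ∧ ¬ BoundsDConsistent D₃ hD cLin := by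
  constructor
  · intro i d hd
    fin_cases i <;> simp only [m0, M0, m1, M1, m2, M2, Set.mem_insert_iff,
      Set.mem_singleton_iff] at hd
    · rcases hd with rfl | rfl
      · exact ⟨![3,1,0], sol310, rfl, bnds hD _ (by decide) (by decide) (by decide)⟩
      · exact ⟨![6,2,0], sol620, rfl, bnds hD _ (by decide) (by decide) (by decide)⟩
    · rcases hd with rfl | rfl
      · exact ⟨![5,0,1], sol501, rfl, bnds hD _ (by decide) (by decide) (by decide)⟩
      · exact ⟨![6,2,0], sol620, rfl, bnds hD _ (by decide) (by decide) (by decide)⟩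
    · rcases hd with rfl | rfl
      · exact ⟨![3,1,0], sol310, rfl, bnds hD _ (by decide) (by decide) (by decide)⟩
      · exact ⟨![5,0,1], sol501, rfl, bnds hD _ (by decide) (by decide) (by decide)⟩
  · intro h
    obtain ⟨θ, hsol, h1, hmem⟩ := h 1 ((D₃ 1).min' (hD 1)) (Or.inl rfl)
    rw [m1] at h1
    have hsol' : ((θ 0 : ℤ) : ℝ) = 3 * ((θ 1 : ℤ) : ℝ) + 5 * ((θ 2 : ℤ) : ℝ) := hsol
    have he : θ 0 = 3 * θ 1 + 5 * θ 2 := by exact_mod_cast hsol'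
    have h0 := hmem 0
    have h2 := hmem 2
    simp only [D₃, Matrix.cons_val_zero, Finset.mem_insert, Finset.mem_singleton,
      Matrix.cons_val_two, Matrix.tail_cons, Matrix.head_cons, Finset.mem_Icc] at h0 h2
    omega
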